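/- McDiarmid's inequality: if X₁,…,X_m are independent random variables with values in a space 𝒳, and f : 𝒳^m → ℝ satisfies the bounded differences condition |f(x₁,…,x_i,…,x_m) − f(x₁,…,x_i',…,x_m)| ≤ c_i for all inputs and all i, then for every ε > 0, P[f(X₁,…,X_m) − E[f(X₁,…,X_m)] ≥ ε] ≤ exp(−2ε² / Σ_i c_i²). -/

import Mathlib

open MeasureTheory ProbabilityTheory

namespace McD

lemma hcalc {p : ℝ} (hp0 : 0 ≤ p) (hp1 : p ≤ 1) (h : ℝ) :
    (1 - p) * Real.exp (-p * h) + p * Real.exp ((1 - p) * h) ≤ Real.exp (h ^ 2 / 8) := by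
  set F : ℝ → ℝ := fun h => (1 - p) * Real.exp (-p * h) + p * Real.exp ((1 - p) * h) with hF
  have hFpos : ∀ x, 0 < F x := by
    intro x
    have key := convexOn_exp.2 (Set.mem_univ (-p * x)) (Set.mem_univ ((1 - p) * x))
      (by linarith : (0:ℝ) ≤ 1 - p) hp0 (by ring)
    simp only [smul_eq_mul] at key
    have hpos : (0:ℝ) < Real.exp ((1 - p) * (-p * x) + p * ((1 - p) * x)) := Real.exp_pos _
    show 0 < (1 - p) * Real.exp (-p * x) + p * Real.exp ((1 - p) * x)
    linarith
  -- derivative of F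
  have hF' : ∀ x, HasDerivAt F (p * (1 - p) * (Real.exp ((1 - p) * x) - Real.exp (-p * x))) x := by
    intro x
    have h1 : HasDerivAt (fun x : ℝ => Real.exp (-p * x)) (Real.exp (-p * x) * (-p)) x := by
      simpa using (((hasDerivAt_id x).const_mul (-p)).exp)
    have h2 : HasDerivAt (fun x : ℝ => Real.exp ((1 - p) * x)) (Real.exp ((1 - p) * x) * (1 - p)) x := by
      simpa using (((hasDerivAt_id x).const_mul (1 - p)).exp)
    have := ((h1.const_mul (1 - p)).add (h2.const_mul p))
    exact this.congr_deriv (by ring)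
  set N : ℝ → ℝ := fun x => p * (1 - p) * (Real.exp ((1 - p) * x) - Real.exp (-p * x)) with hN
  have hN' : ∀ x, HasDerivAt N (p * (1 - p) * ((1 - p) * Real.exp ((1 - p) * x) + p * Real.exp (-p * x))) x := by
    intro x
    have h1 : HasDerivAt (fun x : ℝ => Real.exp (-p * x)) (Real.exp (-p * x) * (-p)) x := by
      simpa using (((hasDerivAt_id x).const_mul (-p)).exp)
    have h2 : HasDerivAt (fun x : ℝ => Real.exp ((1 - p) * x)) (Real.exp ((1 - p) * x) * (1 - p)) x := by
      simpa using (((hasDerivAt_id x).const_mul (1 - p)).exp)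
    have := (h2.sub h1).const_mul (p * (1 - p))
    exact this.congr_deriv (by ring)
  -- G and its derivative D
  set G : ℝ → ℝ := fun x => x ^ 2 / 8 - Real.log (F x) with hG
  set D : ℝ → ℝ := fun x => x / 4 - N x / F x with hD
  have hG' : ∀ x, HasDerivAt G (D x) x := by
    intro x
    have h1 : HasDerivAt (fun x : ℝ => x ^ 2 / 8) (x / 4) x := by
      have := (hasDerivAt_pow 2 x).div_const 8
      exact this.congr_deriv (by ring)
    have h2 : HasDerivAt (fun x => Real.log (F x)) (N x / F x) x :=
      (hF' x).log (hFpos x).ne'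
    exact h1.sub h2
  -- derivative of D is nonneg
  have hD' : ∀ x, HasDerivAt D
      (1 / 4 - (p * (1 - p) * ((1 - p) * Real.exp ((1 - p) * x) + p * Real.exp (-p * x)) * F x - N x * N x) / (F x) ^ 2) x := by
    intro x
    have h1 : HasDerivAt (fun x : ℝ => x / 4) (1 / 4) x := by
      simpa using (hasDerivAt_id x).div_const 4
    exact h1.sub ((hN' x).div (hF' x) (hFpos x).ne')
  have hDnonneg : ∀ x, 0 ≤ 1 / 4 - (p * (1 - p) * ((1 - p) * Real.exp ((1 - p) * x) + p * Real.exp (-p * x)) * F x - N x * N x) / (F x) ^ 2 := by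
    intro x
    set u := Real.exp (-p * x) with hu
    set v := Real.exp ((1 - p) * x) with hv
    have hu0 : 0 < u := Real.exp_pos _
    have hv0 : 0 < v := Real.exp_pos _
    have hFx : F x = (1 - p) * u + p * v := rfl
    have hNx : N x = p * (1 - p) * (v - u) := rfl
    rw [sub_nonneg, div_le_iff₀ (pow_pos (hFpos x) 2)]
    rw [hFx, hNx]
    nlinarith [sq_nonneg ((1 - p) * u - p * v), mul_pos hu0 hv0, hp0, hp1]
  -- D is monotone, D 0 = 0
  have hDmono : Monotone D := by
    apply monotone_of_deriv_nonneg
    · exact fun x => (hD' x).differentiableAt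
    · intro x
      rw [(hD' x).deriv]
      exact hDnonneg x
  have hF0 : F 0 = 1 := by simp [hF]
  have hD0 : D 0 = 0 := by simp [hD, hN, hF0]
  have hG0 : G 0 = 0 := by simp [hG, hF0]
  -- G h ≥ 0
  have hGnonneg : 0 ≤ G h := by
    rcases le_total 0 h with hh | hh
    · have hmono : MonotoneOn G (Set.Ici (0:ℝ)) := by
        apply monotoneOn_of_deriv_nonneg (convex_Ici 0)
          (Continuous.continuousOn (by
            exact continuous_iff_continuousAt.2 fun x => (hG' x).continuousAt))
          (fun x _ => (hG' x).differentiableAt.differentiableWithinAt)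
        intro x hx
        rw [(hG' x).deriv]
        rw [interior_Ici] at hx
        calc (0:ℝ) = D 0 := hD0.symm
          _ ≤ D x := hDmono (le_of_lt hx)
      have := hmono (Set.self_mem_Ici) (Set.mem_Ici.2 hh) hh
      linarith [hG0 ▸ this]
    · have hanti : AntitoneOn G (Set.Iic (0:ℝ)) := by
        apply antitoneOn_of_deriv_nonpos (convex_Iic 0)
          (Continuous.continuousOn (by
            exact continuous_iff_continuousAt.2 fun x => (hG' x).continuousAt))
          (fun x _ => (hG' x).differentiableAt.differentiableWithinAt)
        intro x hx
        rw [(hG' x).deriv]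
        rw [interior_Iic] at hx
        calc D x ≤ D 0 := hDmono (le_of_lt hx)
          _ = 0 := hD0
      have := hanti (Set.mem_Iic.2 hh) (Set.self_mem_Iic) hh
      linarith [hG0 ▸ this]
  -- conclude
  have : Real.log (F h) ≤ h ^ 2 / 8 := by simp only [hG] at hGnonneg; linarith
  calc F h = Real.exp (Real.log (F h)) := (Real.exp_log (hFpos h)).symm
    _ ≤ Real.exp (h ^ 2 / 8) := Real.exp_le_exp.2 this

lemma integrable_of_bdd {α : Type*} [MeasurableSpace α] {ν : Measure α} [IsFiniteMeasure ν]
    {g : α → ℝ} (hg : AEStronglyMeasurable g ν) {B : ℝ} (hB : ∀ x, |g x| ≤ B) :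
    Integrable g ν :=
  (integrable_const B).mono' hg (Filter.Eventually.of_forall (by simpa using hB))

/-- Hoeffding's lemma, mean-zero version. -/
lemma hoeffding_zero {α : Type*} [MeasurableSpace α] (ν : Measure α) [IsProbabilityMeasure ν]
    {Z : α → ℝ} (hZ : Measurable Z) {a b : ℝ} (hlb : ∀ x, a ≤ Z x) (hub : ∀ x, Z x ≤ b)
    (hmean : ∫ x, Z x ∂ν = 0) (t : ℝ) :
    ∫ x, Real.exp (t * Z x) ∂ν ≤ Real.exp (t ^ 2 * (b - a) ^ 2 / 8) := by
  have hne : Nonempty α := by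
    by_contra hemp
    rw [not_nonempty_iff] at hemp
    have : ν Set.univ = 1 := measure_univ
    simp [Set.univ_eq_empty_iff.2 hemp] at this
  obtain ⟨x₀⟩ := hne
  have hab : a ≤ b := le_trans (hlb x₀) (hub x₀)
  -- integrability facts
  have hZint : Integrable Z ν := integrable_of_bdd hZ.aestronglyMeasurable
    (B := max |a| |b|) (fun x => abs_le.2 ⟨le_trans (neg_le_neg (le_max_left |a| |b|))
      (le_trans (neg_abs_le a) (hlb x)), le_trans (hub x) (le_trans (le_abs_self b) (le_max_right _ _))⟩)
  have ha0 : a ≤ 0 := by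
    have : ∫ x, Z x ∂ν ≥ ∫ _x, a ∂ν := integral_mono (integrable_const a) hZint hlb
    simp [hmean] at this
    simpa using this
  have hb0 : 0 ≤ b := by
    have : ∫ x, Z x ∂ν ≤ ∫ _x, b ∂ν := integral_mono hZint (integrable_const b) hub
    simp [hmean] at this
    simpa using this
  rcases eq_or_lt_of_le hab with heq | hlt
  · -- a = b : Z ≡ 0
    have ha : a = 0 := le_antisymm ha0 (heq ▸ hb0)
    have hZ0 : ∀ x, Z x = 0 := fun x =>
      le_antisymm (by rw [← ha, heq]; exact hub x) (by rw [← ha]; exact hlb x)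
    simp only [hZ0, mul_zero, Real.exp_zero]
    rw [integral_const]
    simp only [probReal_univ, one_smul]
    exact Real.one_le_exp (by positivity)
  · -- pointwise convexity bound
    have hba : 0 < b - a := sub_pos.2 hlt
    have hptw : ∀ x, Real.exp (t * Z x) ≤
        ((b - Z x) * Real.exp (t * a) + (Z x - a) * Real.exp (t * b)) / (b - a) := by
      intro x
      have hl : (0:ℝ) ≤ (b - Z x) / (b - a) := div_nonneg (by linarith [hub x]) hba.le
      have hr : (0:ℝ) ≤ (Z x - a) / (b - a) := div_nonneg (by linarith [hlb x]) hba.le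
      have hsum : (b - Z x) / (b - a) + (Z x - a) / (b - a) = 1 := by
        field_simp
        ring
      have key := convexOn_exp.2 (Set.mem_univ (t * a)) (Set.mem_univ (t * b)) hl hr hsum
      simp only [smul_eq_mul] at key
      have harg : (b - Z x) / (b - a) * (t * a) + (Z x - a) / (b - a) * (t * b) = t * Z x := by
        field_simp
        ring
      rw [harg] at key
      calc Real.exp (t * Z x) ≤ (b - Z x) / (b - a) * Real.exp (t * a) + (Z x - a) / (b - a) * Real.exp (t * b) := key
        _ = ((b - Z x) * Real.exp (t * a) + (Z x - a) * Real.exp (t * b)) / (b - a) := by ring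
    -- integrate
    have hexpint : Integrable (fun x => Real.exp (t * Z x)) ν := by
      refine integrable_of_bdd ((hZ.const_mul t).exp).aestronglyMeasurable
        (B := Real.exp (|t| * max |a| |b|)) (fun x => ?_)
      rw [abs_of_pos (Real.exp_pos _), Real.exp_le_exp]
      calc t * Z x ≤ |t * Z x| := le_abs_self _
        _ = |t| * |Z x| := abs_mul _ _
        _ ≤ |t| * max |a| |b| := by
            refine mul_le_mul_of_nonneg_left ?_ (abs_nonneg t)
            rcases le_total 0 (Z x) with h0 | h0
            · rw [abs_of_nonneg h0]
              exact le_trans (hub x) (le_trans (le_abs_self b) (le_max_right _ _))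
            · rw [abs_of_nonpos h0]
              exact le_trans (by linarith [hlb x] : -Z x ≤ -a)
                (le_trans (neg_le_abs a) (le_max_left _ _))
    have hrint : Integrable (fun x => ((b - Z x) * Real.exp (t * a) + (Z x - a) * Real.exp (t * b)) / (b - a)) ν := by
      apply Integrable.div_const
      exact (((integrable_const b).sub hZint).mul_const _).add ((hZint.sub (integrable_const a)).mul_const _)
    have hint_le := integral_mono hexpint hrint hptw
    have hrhs : ∫ x, ((b - Z x) * Real.exp (t * a) + (Z x - a) * Real.exp (t * b)) / (b - a) ∂ν
        = (b * Real.exp (t * a) - a * Real.exp (t * b)) / (b - a) := by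
      have h1 : (fun x => ((b - Z x) * Real.exp (t * a) + (Z x - a) * Real.exp (t * b)) / (b - a))
          = fun x => (Z x) * ((Real.exp (t * b) - Real.exp (t * a)) / (b - a))
            + (b * Real.exp (t * a) - a * Real.exp (t * b)) / (b - a) := by
        funext x
        field_simp
        ring
      rw [h1, integral_add (hZint.mul_const _) (integrable_const _), integral_mul_const, hmean,
        integral_const]
      simp
    rw [hrhs] at hint_le
    refine le_trans hint_le ?_
    -- apply hcalc with p = -a/(b-a), h = t*(b-a)
    set p := -a / (b - a) with hp
    have hp0 : 0 ≤ p := div_nonneg (by linarith) hba.le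
    have hp1 : p ≤ 1 := by
      rw [div_le_one hba]
      linarith
    have hpb : p * (b - a) = -a := div_mul_cancel₀ _ hba.ne'
    have h1p : 1 - p = b / (b - a) := by
      rw [hp, eq_div_iff hba.ne']
      linarith [hpb]
    have e1 : -p * (t * (b - a)) = t * a := by
      calc -p * (t * (b - a)) = -(p * (b - a)) * t := by ring
        _ = t * a := by rw [hpb]; ring
    have e2 : (1 - p) * (t * (b - a)) = t * b := by
      calc (1 - p) * (t * (b - a)) = ((b - a) - p * (b - a)) * t := by ring
        _ = t * b := by rw [hpb]; ring
    have key := hcalc hp0 hp1 (t * (b - a))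
    rw [e1, e2] at key
    have hform : (b * Real.exp (t * a) - a * Real.exp (t * b)) / (b - a)
        = (1 - p) * Real.exp (t * a) + p * Real.exp (t * b) := by
      rw [h1p, hp]
      ring
    rw [hform]
    exact le_trans key (Real.exp_le_exp.2 (by rw [mul_pow]))

/-- Hoeffding's lemma, oscillation form. -/
lemma hoeffding_osc {α : Type*} [MeasurableSpace α] (ν : Measure α) [IsProbabilityMeasure ν]
    {Z : α → ℝ} (hZ : Measurable Z) {c : ℝ} (hc : 0 ≤ c)
    (hosc : ∀ x y, |Z x - Z y| ≤ c) (t : ℝ) :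
    ∫ x, Real.exp (t * (Z x - ∫ y, Z y ∂ν)) ∂ν ≤ Real.exp (t ^ 2 * c ^ 2 / 8) := by
  haveI hne : Nonempty α := by
    by_contra hemp
    rw [not_nonempty_iff] at hemp
    have : ν Set.univ = 1 := measure_univ
    simp [Set.univ_eq_empty_iff.2 hemp] at this
  obtain ⟨x₀⟩ := id hne
  have hbdd : BddAbove (Set.range Z) := by
    refine ⟨Z x₀ + c, fun z hz => ?_⟩
    obtain ⟨x, rfl⟩ := hz
    have := abs_le.1 (hosc x x₀)
    linarith [this.2]
  set b := sSup (Set.range Z) with hb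
  have hub : ∀ x, Z x ≤ b := fun x => le_csSup hbdd ⟨x, rfl⟩
  have hlb : ∀ x, b - c ≤ Z x := by
    intro x
    have : b ≤ Z x + c := by
      apply csSup_le (Set.range_nonempty Z)
      rintro z ⟨y, rfl⟩
      have := abs_le.1 (hosc y x)
      linarith [this.2]
    linarith
  have hZint : Integrable Z ν := integrable_of_bdd hZ.aestronglyMeasurable
    (B := max |b - c| |b|) (fun x => abs_le.2 ⟨le_trans (neg_le_neg (le_max_left _ _))
      (le_trans (neg_abs_le _) (hlb x)), le_trans (hub x) (le_trans (le_abs_self b) (le_max_right _ _))⟩)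
  set M := ∫ y, Z y ∂ν with hM
  have hMlb : ∀ x, b - c - M ≤ Z x - M := fun x => by linarith [hlb x]
  have hMub : ∀ x, Z x - M ≤ b - M := fun x => by linarith [hub x]
  have hmean : ∫ x, (Z x - M) ∂ν = 0 := by
    rw [integral_sub hZint (integrable_const M), integral_const]
    simp [hM]
  have key := hoeffding_zero ν (hZ.sub measurable_const) hMlb hMub hmean t
  have : b - M - (b - c - M) = c := by ring
  rw [this] at key
  exact key

lemma osc_le {m : ℕ} {𝒳 : Type*} {f : (Fin m → 𝒳) → ℝ} {c : Fin m → ℝ}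
    (hbd : ∀ (x : Fin m → 𝒳) (i : Fin m) (x' : 𝒳), |f x - f (Function.update x i x')| ≤ c i)
    (x y : Fin m → 𝒳) : |f x - f y| ≤ ∑ i, c i := by
  classical
  have key : ∀ s : Finset (Fin m),
      |f x - f (fun i => if i ∈ s then y i else x i)| ≤ ∑ i ∈ s, c i := by
    intro s
    induction s using Finset.induction_on with
    | empty => simp
    | @insert j s hj ih =>
      have hz : (fun i => if i ∈ insert j s then y i else x i)
          = Function.update (fun i => if i ∈ s then y i else x i) j (y j) := by
        funext i
        by_cases hij : i = j
        · subst hij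
          simp
        · rw [Function.update_of_ne hij]
          simp [Finset.mem_insert, hij]
      rw [hz, Finset.sum_insert hj]
      set z : Fin m → 𝒳 := fun i => if i ∈ s then y i else x i with hzdef
      calc |f x - f (Function.update z j (y j))|
          ≤ |f x - f z| + |f z - f (Function.update z j (y j))| := abs_sub_le _ _ _
        _ ≤ (∑ i ∈ s, c i) + c j := add_le_add ih (hbd z j (y j))
        _ = c j + ∑ i ∈ s, c i := by ring
  have h := key Finset.univ
  simpa using h

set_option maxHeartbeats 1000000 in
lemma tensor {𝒳 : Type*} [MeasurableSpace 𝒳] (m : ℕ) :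
    ∀ (ν : Fin m → Measure 𝒳), (∀ i, IsProbabilityMeasure (ν i)) →
    ∀ (f : (Fin m → 𝒳) → ℝ), Measurable f →
    ∀ (c : Fin m → ℝ), (∀ i, 0 ≤ c i) →
    (∀ (x : Fin m → 𝒳) (i : Fin m) (x' : 𝒳), |f x - f (Function.update x i x')| ≤ c i) →
    ∀ t : ℝ,
    ∫ x, Real.exp (t * (f x - ∫ y, f y ∂Measure.pi ν)) ∂Measure.pi ν ≤
      Real.exp (t ^ 2 * (∑ i, c i ^ 2) / 8) := by
  induction m with
  | zero =>
    intro ν hν f hf c hc hbd t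
    haveI : ∀ i, IsProbabilityMeasure (ν i) := hν
    haveI : IsProbabilityMeasure (Measure.pi ν) := by infer_instance
    set x₀ : Fin 0 → 𝒳 := fun i => i.elim0 with hx₀
    have hfc : ∀ y : Fin 0 → 𝒳, f y = f x₀ := fun y => congrArg f (funext fun i => i.elim0)
    have h1 : ∫ y, f y ∂Measure.pi ν = f x₀ := by
      rw [show f = fun _ => f x₀ from funext hfc]
      simp
    rw [h1]
    have h2 : (fun x => Real.exp (t * (f x - f x₀))) = fun _ => (1:ℝ) := by
      funext x
      rw [hfc x]
      simp
    rw [h2]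
    simp
  | succ m ih =>
    intro ν hν f hf c hc hbd t
    haveI : ∀ i, IsProbabilityMeasure (ν i) := hν
    haveI : IsProbabilityMeasure (Measure.pi ν) := by infer_instance
    set ν' : Fin m → Measure 𝒳 := fun j => ν j.succ with hν'def
    haveI : ∀ j, IsProbabilityMeasure (ν' j) := fun j => hν _
    set π' : Measure (Fin m → 𝒳) := Measure.pi ν' with hπ'def
    haveI : IsProbabilityMeasure π' := by infer_instance
    haveI : IsProbabilityMeasure ((ν 0).prod π') := by infer_instance
    -- nonempty
    haveI hne : Nonempty 𝒳 := by
      by_contra hemp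
      rw [not_nonempty_iff] at hemp
      have h1 : (ν 0) Set.univ = 1 := measure_univ
      simp [Set.univ_eq_empty_iff.2 hemp] at h1
    obtain ⟨ξ⟩ := id hne
    set x₀ : Fin (m + 1) → 𝒳 := fun _ => ξ with hx₀
    set B : ℝ := |f x₀| + ∑ i, c i with hB
    have hfB : ∀ x, |f x| ≤ B := by
      intro x
      have := osc_le hbd x x₀
      calc |f x| ≤ |f x - f x₀| + |f x₀| := by
            have := abs_add_le (f x - f x₀) (f x₀); simpa using this
        _ ≤ (∑ i, c i) + |f x₀| := by linarith [osc_le hbd x x₀]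
        _ = B := by rw [hB]; ring
    -- the cons map and F
    set F : 𝒳 × (Fin m → 𝒳) → ℝ := fun q => f (Fin.cons q.1 q.2) with hFdef
    have hconsm : Measurable (fun q : 𝒳 × (Fin m → 𝒳) => (Fin.cons q.1 q.2 : Fin (m+1) → 𝒳)) := by
      apply measurable_pi_iff.2
      intro i
      refine Fin.cases ?_ ?_ i
      · simp only [Fin.cons_zero]
        exact measurable_fst
      · intro j
        simp only [Fin.cons_succ]
        exact (measurable_pi_apply j).comp measurable_snd
    have hFmeas : Measurable F := hf.comp hconsm
    have hFB : ∀ q, |F q| ≤ B := fun q => hfB _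
    have hFint : Integrable F ((ν 0).prod π') := integrable_of_bdd hFmeas.aestronglyMeasurable hFB
    -- transfer lemma
    have hmp := measurePreserving_piFinSuccAbove ν 0
    have htrans : ∀ g : (Fin (m + 1) → 𝒳) → ℝ,
        ∫ x, g x ∂Measure.pi ν = ∫ q, g (Fin.cons q.1 q.2) ∂((ν 0).prod π') := by
      intro g
      have h1 := (hmp.symm (MeasurableEquiv.piFinSuccAbove (fun _ : Fin (m+1) => 𝒳) 0)).integral_comp
        (MeasurableEquiv.measurableEmbedding _) g
      rw [← h1]
      apply integral_congr_ae
      filter_upwards with q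
      congr 1
      show (Fin.insertNthEquiv (fun _ => 𝒳) 0) q = Fin.cons q.1 q.2
      simp [Fin.insertNthEquiv, Fin.insertNth_zero']
    -- g
    set g : (Fin m → 𝒳) → ℝ := fun y => ∫ z, F (z, y) ∂(ν 0) with hgdef
    have hgsm : StronglyMeasurable g := hFmeas.stronglyMeasurable.integral_prod_left'
    have hgB : ∀ y, |g y| ≤ B := by
      intro y
      have h1 : ‖∫ z, F (z, y) ∂(ν 0)‖ ≤ B * ((ν 0) Set.univ).toReal :=
        norm_integral_le_of_norm_le_const (Filter.Eventually.of_forall fun z => by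
          simpa using hFB (z, y))
      simpa using h1
    set M : ℝ := ∫ y, f y ∂Measure.pi ν with hM
    have hMB : |M| ≤ B := by
      have h1 : ‖∫ y, f y ∂Measure.pi ν‖ ≤ B * ((Measure.pi ν) Set.univ).toReal :=
        norm_integral_le_of_norm_le_const (Filter.Eventually.of_forall fun y => by
          simpa using hfB y)
      simpa using h1
    -- mean of g
    have hgM : ∫ y, g y ∂π' = M := by
      rw [hM, htrans f]
      exact (integral_prod_symm F hFint).symm
    -- exp bound helper
    have hexpB : ∀ w r : ℝ, |w| ≤ B → |r| ≤ B → Real.exp (t * (w - r)) ≤ Real.exp (|t| * (2 * B)) := by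
      intro w r hw hr
      rw [Real.exp_le_exp]
      calc t * (w - r) ≤ |t * (w - r)| := le_abs_self _
        _ = |t| * |w - r| := abs_mul _ _
        _ ≤ |t| * (2 * B) := by
            refine mul_le_mul_of_nonneg_left ?_ (abs_nonneg t)
            calc |w - r| ≤ |w| + |r| := abs_sub _ _
              _ ≤ 2 * B := by linarith
    have hexpPos : ∀ s : ℝ, |Real.exp s| = Real.exp s := fun s => abs_of_pos (Real.exp_pos s)
    -- main chain
    have step1 : ∫ x, Real.exp (t * (f x - M)) ∂Measure.pi ν
        = ∫ q, Real.exp (t * (F q - M)) ∂((ν 0).prod π') :=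
      htrans (fun x => Real.exp (t * (f x - M)))
    have hexpint : Integrable (fun q => Real.exp (t * (F q - M))) ((ν 0).prod π') := by
      refine integrable_of_bdd (((hFmeas.sub measurable_const).const_mul t).exp).aestronglyMeasurable
        (B := Real.exp (|t| * (2 * B))) (fun q => ?_)
      rw [hexpPos]
      exact hexpB _ _ (hFB q) hMB
    have step2 : ∫ q, Real.exp (t * (F q - M)) ∂((ν 0).prod π')
        = ∫ y, (∫ z, Real.exp (t * (F (z, y) - M)) ∂(ν 0)) ∂π' :=
      integral_prod_symm _ hexpint
    -- inner bound
    have hinner : ∀ y, ∫ z, Real.exp (t * (F (z, y) - M)) ∂(ν 0)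
        ≤ Real.exp (t * (g y - M)) * Real.exp (t ^ 2 * (c 0) ^ 2 / 8) := by
      intro y
      have hZmeas : Measurable (fun z => F (z, y)) := hFmeas.comp measurable_prodMk_right
      have hZosc : ∀ z z', |F (z, y) - F (z', y)| ≤ c 0 := by
        intro z z'
        have h1 := hbd (Fin.cons z y) 0 z'
        rwa [Fin.update_cons_zero] at h1
      have hsplit : ∀ z, Real.exp (t * (F (z, y) - M))
          = Real.exp (t * (g y - M)) * Real.exp (t * (F (z, y) - g y)) := by
        intro z
        rw [← Real.exp_add]
        congr 1
        ring
      calc ∫ z, Real.exp (t * (F (z, y) - M)) ∂(ν 0)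
          = ∫ z, Real.exp (t * (g y - M)) * Real.exp (t * (F (z, y) - g y)) ∂(ν 0) := by
            apply integral_congr_ae
            filter_upwards with z
            exact hsplit z
        _ = Real.exp (t * (g y - M)) * ∫ z, Real.exp (t * (F (z, y) - g y)) ∂(ν 0) :=
            integral_const_mul _ _
        _ ≤ Real.exp (t * (g y - M)) * Real.exp (t ^ 2 * (c 0) ^ 2 / 8) := by
            refine mul_le_mul_of_nonneg_left ?_ (Real.exp_pos _).le
            exact hoeffding_osc (ν 0) hZmeas (hc 0) hZosc t
    -- outer integral
    have houter_int1 : Integrable (fun y => ∫ z, Real.exp (t * (F (z, y) - M)) ∂(ν 0)) π' :=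
      hexpint.integral_prod_right
    have hgexp_int : Integrable (fun y => Real.exp (t * (g y - M)) * Real.exp (t ^ 2 * (c 0) ^ 2 / 8)) π' := by
      refine integrable_of_bdd (((((hgsm.measurable).sub measurable_const).const_mul t).exp.mul_const _)).aestronglyMeasurable
        (B := Real.exp (|t| * (2 * B)) * Real.exp (t ^ 2 * (c 0) ^ 2 / 8)) (fun y => ?_)
      rw [abs_mul, hexpPos, hexpPos]
      exact mul_le_mul_of_nonneg_right (hexpB _ _ (hgB y) hMB) (Real.exp_pos _).le
    have step3 : ∫ y, (∫ z, Real.exp (t * (F (z, y) - M)) ∂(ν 0)) ∂π'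
        ≤ ∫ y, Real.exp (t * (g y - M)) * Real.exp (t ^ 2 * (c 0) ^ 2 / 8) ∂π' :=
      integral_mono houter_int1 hgexp_int hinner
    have step4 : ∫ y, Real.exp (t * (g y - M)) * Real.exp (t ^ 2 * (c 0) ^ 2 / 8) ∂π'
        = Real.exp (t ^ 2 * (c 0) ^ 2 / 8) * ∫ y, Real.exp (t * (g y - M)) ∂π' := by
      rw [integral_mul_const]
      ring
    -- IH for g
    have hgbd : ∀ (y : Fin m → 𝒳) (j : Fin m) (y' : 𝒳),
        |g y - g (Function.update y j y')| ≤ c j.succ := by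
      intro y j y'
      have hZint1 : Integrable (fun z => F (z, y)) (ν 0) :=
        integrable_of_bdd (hFmeas.comp measurable_prodMk_right).aestronglyMeasurable
          (fun z => hFB (z, y))
      have hZint2 : Integrable (fun z => F (z, Function.update y j y')) (ν 0) :=
        integrable_of_bdd (hFmeas.comp measurable_prodMk_right).aestronglyMeasurable
          (fun z => hFB (z, _))
      have heq : g y - g (Function.update y j y')
          = ∫ z, (F (z, y) - F (z, Function.update y j y')) ∂(ν 0) := by
        rw [integral_sub hZint1 hZint2]
      rw [heq]
      have hptw : ∀ z, |F (z, y) - F (z, Function.update y j y')| ≤ c j.succ := by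
        intro z
        have h1 := hbd (Fin.cons z y) j.succ y'
        rwa [← Fin.cons_update] at h1
      have h2 : ‖∫ z, (F (z, y) - F (z, Function.update y j y')) ∂(ν 0)‖
          ≤ c j.succ * ((ν 0) Set.univ).toReal :=
        norm_integral_le_of_norm_le_const (Filter.Eventually.of_forall fun z => by
          simpa using hptw z)
      simpa using h2
    have hIH := ih ν' (fun j => hν _) g hgsm.measurable (fun j => c j.succ)
      (fun j => hc _) hgbd t
    rw [← hπ'def] at hIH
    rw [hgM] at hIH
    -- combine
    have fin1 : ∫ x, Real.exp (t * (f x - M)) ∂Measure.pi ν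
        = ∫ y, (∫ z, Real.exp (t * (F (z, y) - M)) ∂(ν 0)) ∂π' := by rw [step1, step2]
    have fin2 : ∫ y, (∫ z, Real.exp (t * (F (z, y) - M)) ∂(ν 0)) ∂π'
        ≤ Real.exp (t ^ 2 * (c 0) ^ 2 / 8) * ∫ y, Real.exp (t * (g y - M)) ∂π' :=
      step3.trans (le_of_eq step4)
    have fin3 : (Real.exp (t ^ 2 * (c 0) ^ 2 / 8) * ∫ y, Real.exp (t * (g y - M)) ∂π')
        ≤ Real.exp (t ^ 2 * (c 0) ^ 2 / 8) * Real.exp (t ^ 2 * (∑ j : Fin m, c (Fin.succ j) ^ 2) / 8) :=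
      mul_le_mul_of_nonneg_left hIH (Real.exp_pos _).le
    refine (fin1 ▸ (fin2.trans fin3)).trans (le_of_eq ?_)
    rw [← Real.exp_add, Fin.sum_univ_succ]
    congr 1
    ring

lemma law_eq_pi {Ω : Type*} [MeasurableSpace Ω] (μ : Measure Ω) [IsProbabilityMeasure μ]
    {𝒳 : Type*} [MeasurableSpace 𝒳] (m : ℕ) (X : Fin m → Ω → 𝒳) (hX : ∀ i, Measurable (X i))
    (hindep : iIndepFun X μ) :
    μ.map (fun ω i => X i ω) = Measure.pi (fun i => μ.map (X i)) := by
  have hJ : Measurable (fun ω (i : Fin m) => X i ω) := measurable_pi_lambda _ hX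
  refine (Measure.pi_eq fun s hs => ?_).symm
  rw [Measure.map_apply hJ (MeasurableSet.univ_pi hs)]
  have hpre : (fun ω (i : Fin m) => X i ω) ⁻¹' Set.pi Set.univ s = ⋂ i, X i ⁻¹' s i := by
    ext ω
    simp [Set.mem_pi]
  rw [hpre, hindep.meas_iInter (fun i => ⟨s i, hs i, rfl⟩)]
  exact Finset.prod_congr rfl fun i _ => (Measure.map_apply (hX i) (hs i)).symm

end McD

open McD

theorem mcdiarmid_inequality {Ω : Type*} [MeasurableSpace Ω] (μ : Measure Ω)
    [IsProbabilityMeasure μ] {𝒳 : Type*} [MeasurableSpace 𝒳] (m : ℕ)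
    (X : Fin m → Ω → 𝒳) (hX : ∀ i, Measurable (X i))
    (hindep : iIndepFun X μ)
    (f : (Fin m → 𝒳) → ℝ) (hf : Measurable f)
    (hint : Integrable (fun ω => f (fun i => X i ω)) μ)
    (c : Fin m → ℝ) (hc : ∀ i, 0 < c i)
    (hbd : ∀ (x : Fin m → 𝒳) (i : Fin m) (x' : 𝒳),
      |f x - f (Function.update x i x')| ≤ c i)
    (ε : ℝ) (hε : 0 < ε) :
    (μ {ω | f (fun i => X i ω) - ∫ ω', f (fun i => X i ω') ∂μ ≥ ε}).toReal ≤
      Real.exp (-2 * ε ^ 2 / ∑ i, c i ^ 2) := by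
  rcases Nat.eq_zero_or_pos m with hm | hm
  · subst hm
    have h1 : (∑ i : Fin 0, c i ^ 2) = 0 := by simp
    rw [h1]
    have h2 : -2 * ε ^ 2 / (0:ℝ) = 0 := by simp
    rw [h2, Real.exp_zero]
    calc (μ _).toReal ≤ (1 : ENNReal).toReal := ENNReal.toReal_mono ENNReal.one_ne_top prob_le_one
      _ = 1 := by simp
  · -- setup
    haveI hfin : Nonempty (Fin m) := Fin.pos_iff_nonempty.1 hm
    set S : ℝ := ∑ i, c i ^ 2 with hS
    have hSpos : 0 < S := Finset.sum_pos (fun i _ => pow_pos (hc i) 2) Finset.univ_nonempty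
    set t : ℝ := 4 * ε / S with ht
    have ht0 : 0 ≤ t := by positivity
    -- nonempty Ω and bound on f
    haveI hΩne : Nonempty Ω := by
      by_contra hemp
      rw [not_nonempty_iff] at hemp
      have h1 : μ Set.univ = 1 := measure_univ
      simp [Set.univ_eq_empty_iff.2 hemp] at h1
    obtain ⟨ω₀⟩ := id hΩne
    set x₀ : Fin m → 𝒳 := fun i => X i ω₀ with hx₀
    set B : ℝ := |f x₀| + ∑ i, c i with hB
    have hfB : ∀ x, |f x| ≤ B := by
      intro x
      calc |f x| ≤ |f x - f x₀| + |f x₀| := by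
            have h := abs_add_le (f x - f x₀) (f x₀); simpa using h
        _ ≤ (∑ i, c i) + |f x₀| := by linarith [osc_le hbd x x₀]
        _ = B := by rw [hB]; ring
    set M : ℝ := ∫ ω', f (fun i => X i ω') ∂μ with hM
    have hMB : |M| ≤ B := by
      have h1 : ‖∫ ω', f (fun i => X i ω') ∂μ‖ ≤ B * (μ Set.univ).toReal :=
        norm_integral_le_of_norm_le_const (Filter.Eventually.of_forall fun ω => by
          simpa using hfB _)
      simpa using h1
    set Y : Ω → ℝ := fun ω => f (fun i => X i ω) - M with hY
    have hJ : Measurable (fun ω (i : Fin m) => X i ω) := measurable_pi_lambda _ hX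
    have hYmeas : Measurable Y := (hf.comp hJ).sub measurable_const
    have hYexp_int : Integrable (fun ω => Real.exp (t * Y ω)) μ := by
      refine integrable_of_bdd ((hYmeas.const_mul t).exp).aestronglyMeasurable
        (B := Real.exp (|t| * (2 * B))) (fun ω => ?_)
      rw [abs_of_pos (Real.exp_pos _), Real.exp_le_exp]
      calc t * Y ω ≤ |t * Y ω| := le_abs_self _
        _ = |t| * |Y ω| := abs_mul _ _
        _ ≤ |t| * (2 * B) := by
            refine mul_le_mul_of_nonneg_left ?_ (abs_nonneg t)
            calc |Y ω| ≤ |f (fun i => X i ω)| + |M| := abs_sub _ _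
              _ ≤ 2 * B := by linarith [hfB (fun i => X i ω)]
    -- Chernoff
    have hch := measure_ge_le_exp_mul_mgf (X := Y) (μ := μ) (t := t) ε ht0 hYexp_int
    -- law and mgf bound
    haveI : ∀ i, IsProbabilityMeasure (μ.map (X i)) :=
      fun i => Measure.isProbabilityMeasure_map (hX i).aemeasurable
    set νpi := Measure.pi (fun i => μ.map (X i)) with hνpi
    haveI : IsProbabilityMeasure νpi := by rw [hνpi]; infer_instance
    have hlaw : μ.map (fun ω i => X i ω) = νpi := law_eq_pi μ m X hX hindep
    have hMeq : ∫ x, f x ∂νpi = M := by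
      rw [← hlaw, integral_map hJ.aemeasurable hf.aestronglyMeasurable]
    have hmgf : mgf Y μ t ≤ Real.exp (t ^ 2 * S / 8) := by
      have h1 : mgf Y μ t = ∫ ω, Real.exp (t * Y ω) ∂μ := rfl
      have h2 : ∫ ω, Real.exp (t * Y ω) ∂μ = ∫ x, Real.exp (t * (f x - M)) ∂νpi := by
        rw [← hlaw, integral_map (f := fun x : Fin m → 𝒳 => Real.exp (t * (f x - M))) hJ.aemeasurable
          (((hf.sub measurable_const).const_mul t).exp).aestronglyMeasurable]
      have h3 := tensor m (fun i => μ.map (X i)) (fun i => inferInstance) f hf c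
        (fun i => (hc i).le) hbd t
      rw [← hνpi, hMeq] at h3
      rw [h1, h2]
      exact h3
    -- combine
    have hset : {ω | f (fun i => X i ω) - ∫ ω', f (fun i => X i ω') ∂μ ≥ ε} = {ω | ε ≤ Y ω} := rfl
    rw [hset]
    calc (μ {ω | ε ≤ Y ω}).toReal ≤ Real.exp (-t * ε) * mgf Y μ t := hch
      _ ≤ Real.exp (-t * ε) * Real.exp (t ^ 2 * S / 8) :=
          mul_le_mul_of_nonneg_left hmgf (Real.exp_pos _).le
      _ = Real.exp (-t * ε + t ^ 2 * S / 8) := (Real.exp_add _ _).symm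
      _ = Real.exp (-2 * ε ^ 2 / S) := by
          congr 1
          rw [ht]
          field_simp
          ring
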